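/- Let G be a finite group, π a ℤG-module, and (X,A) a pair of free G-simplicial sets with A ⊆ X. If H^{n+1}_G(X,A;π) = 0, then for every equivariant simplicial map c: A → E(π,n) and every equivariant simplicial map z: X → K(π,n+1) with δ∘c = z|_A, there exists an equivariant simplicial map ℓ: X → E(π,n) with ℓ|_A = c and δ∘ℓ = z. -/

import Mathlib

open CategoryTheory Simplicial Opposite Topology

noncomputable section

/-- A `G`-simplicial set: a simplicial set together with a simplicial action of `G`. -/
structure GSSet (G : Type) [Group G] : Type 1 where
  X : SSet.{0}
  act : G →* CategoryTheory.End X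

namespace GSSet

variable {G : Type} [Group G]

/-- The action of `g : G` on a `G`-simplicial set, as a simplicial map. -/
def a (P : GSSet G) (g : G) : P.X ⟶ P.X := P.act g

/-- The action is free on simplices in every dimension. -/
def Free (P : GSSet G) : Prop :=
  ∀ (g : G) (m : SimplexCategoryᵒᵖ) (x : P.X.obj m), (P.a g).app m x = x → g = 1

/-- Equivariance of a simplicial map between `G`-simplicial sets. -/
def IsEqv (P Q : GSSet G) (f : P.X ⟶ Q.X) : Prop :=
  ∀ g : G, P.a g ≫ f = f ≫ Q.a g

/-- A simplex of a simplicial set is degenerate if it is in the image of a degeneracy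
operator. -/
def _root_.SSet.Degen (X : SSet) {n : ℕ} (x : X _⦋n + 1⦌) : Prop :=
  ∃ (i : Fin (n + 1)) (y : X _⦋n⦌), X.σ i y = x

/-- `dim P ≤ k` : every simplex of dimension `> k` is degenerate. -/
def DimLE (P : GSSet G) (k : ℕ) : Prop :=
  ∀ n : ℕ, k ≤ n → ∀ x : P.X _⦋n + 1⦌, SSet.Degen P.X x

/-- A finite simplicial set: finitely many simplices in each dimension, and finitely many
nondegenerate simplices overall (i.e. finite-dimensional). -/
def FiniteSSet (P : GSSet G) : Prop :=
  (∀ m : SimplexCategoryᵒᵖ, Finite (P.X.obj m)) ∧ ∃ k, P.DimLE k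

/-- A simplicial subset of a `G`-simplicial set, closed under the `G`-action. -/
structure GSub (P : GSSet G) : Type where
  mem : ∀ m : SimplexCategoryᵒᵖ, Set (P.X.obj m)
  map_mem : ∀ {m m' : SimplexCategoryᵒᵖ} (f : m ⟶ m') (x : P.X.obj m),
    x ∈ mem m → P.X.map f x ∈ mem m'
  act_mem : ∀ (g : G) (m : SimplexCategoryᵒᵖ) (x : P.X.obj m),
    x ∈ mem m → (P.a g).app m x ∈ mem m

namespace GSub

variable {P : GSSet G} (A : GSub P)

/-- The underlying simplicial set of a simplicial subset. -/
def toSSet : SSet where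
  obj m := {x : P.X.obj m // x ∈ A.mem m}
  map f := ↾(fun x => ⟨P.X.map f x.1, A.map_mem f x.1 x.2⟩)
  map_id m := by
    ext x : 3
    apply Subtype.ext
    simp
  map_comp f g := by
    ext x : 3
    apply Subtype.ext
    simp

/-- The inclusion of a simplicial subset. -/
def ι : A.toSSet ⟶ P.X where
  app m := ↾(fun x => x.1)
  naturality _ _ _ := rfl

/-- The simplicial subset as a `G`-simplicial set. -/
def toGSSet : GSSet G where
  X := A.toSSet
  act :=
    { toFun := fun g =>
        { app := fun m => ↾(fun x => ⟨(P.a g).app m x.1, A.act_mem g m x.1 x.2⟩)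
          naturality := fun m m' f => by
            ext x : 3
            apply Subtype.ext
            exact NatTrans.naturality_apply (P.a g) f x.1 }
      map_one' := by
        refine SSet.hom_ext fun m => ?_
        ext x : 3
        apply Subtype.ext
        show (P.a 1).app m x.1 = x.1
        have h1 : P.a (1 : G) = 𝟙 P.X := P.act.map_one
        rw [h1]
        rfl
      map_mul' := fun g h => by
        refine SSet.hom_ext fun m => ?_
        ext x : 3
        apply Subtype.ext
        show (P.a (g * h)).app m x.1 = _
        have h1 : P.a (g * h) = P.a h ≫ P.a g := P.act.map_mul g h
        rw [h1]
        rfl }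

end GSub

end GSSet
-- TOP chunk: geometric realization, equivariant continuous maps, homotopy groups
namespace GSSet

variable {G : Type} [Group G]

/-- The geometric realization of (the underlying simplicial set of) a `G`-simplicial set. -/
abbrev T (P : GSSet G) : Type := SSet.toTop.obj P.X

/-- The continuous map induced on geometric realizations by a simplicial map. -/
def tmap {P Q : GSSet G} (f : P.X ⟶ Q.X) : C(P.T, Q.T) := (SSet.toTop.map f).hom

/-- The action of `g` on the geometric realization. -/
def ta (P : GSSet G) (g : G) : C(P.T, P.T) := tmap (P.a g)

/-- An equivariant continuous map between realizations of `G`-simplicial sets. -/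
structure EqvCMap (P Q : GSSet G) : Type where
  f : C(P.T, Q.T)
  eqv : ∀ (g : G) (x : P.T), f (P.ta g x) = Q.ta g (f x)

/-- Equivariant homotopy between equivariant continuous maps: a homotopy which is
equivariant at each time. -/
def EqvCHomotopic {P Q : GSSet G} (f₀ f₁ : EqvCMap P Q) : Prop :=
  ∃ H : ContinuousMap.Homotopy f₀.f f₁.f,
    ∀ (t : unitInterval) (g : G) (x : P.T), H (t, P.ta g x) = Q.ta g (H (t, x))

/-- The set of equivariant homotopy classes of equivariant continuous maps `|X| → |Y|`. -/
def EqvHtpyClasses (P Q : GSSet G) : Type := Quot (@EqvCHomotopic G _ P Q)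

/-- The identity as an equivariant map. -/
def EqvCMap.id (P : GSSet G) : EqvCMap P P := ⟨ContinuousMap.id _, fun _ _ => rfl⟩

/-- Composition of equivariant maps. -/
def EqvCMap.comp {P Q R : GSSet G} (F : EqvCMap Q R) (F' : EqvCMap P Q) : EqvCMap P R :=
  ⟨F.f.comp F'.f, fun g x => by
    simp only [ContinuousMap.comp_apply, F'.eqv g x, F.eqv g]⟩

/-- The realization of an equivariant simplicial map, as an equivariant continuous map. -/
def realize {P Q : GSSet G} (f : P.X ⟶ Q.X) (hf : IsEqv P Q f) : EqvCMap P Q :=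
  ⟨tmap f, fun g x => by
    have h := congrArg (fun u => SSet.toTop.map u) (hf g)
    simp only [Functor.map_comp] at h
    have := congrArg (fun (u : SSet.toTop.obj P.X ⟶ SSet.toTop.obj Q.X) => u x) h
    simpa [tmap, ta] using this⟩

/-- A simplicial map is a weak homotopy equivalence if its geometric realization is a
`G`-homotopy equivalence. -/
def IsGHtpyEq {P Q : GSSet G} (f : P.X ⟶ Q.X) : Prop :=
  ∃ hf : IsEqv P Q f, ∃ K : EqvCMap Q P,
    EqvCHomotopic (K.comp (realize f hf)) (EqvCMap.id P) ∧
    EqvCHomotopic ((realize f hf).comp K) (EqvCMap.id Q)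

end GSSet

/-- A `d`-connected topological space: nonempty, path-connected, and all homotopy groups
`π_i` vanish for `i ≤ d`. -/
def DConnSpace (Z : Type) [TopologicalSpace Z] (d : ℕ) : Prop :=
  Nonempty Z ∧ PathConnectedSpace Z ∧
    ∀ (z : Z) (i : ℕ), i ≤ d → Subsingleton (HomotopyGroup (Fin i) Z z)

/-- A `G`-simplicial set is `1`-connected if its realization is. -/
def GSSet.OneConn {G : Type} [Group G] (P : GSSet G) : Prop := DConnSpace P.T 1

open Topology.Homotopy in
/-- The induced map on homotopy groups of a continuous map. -/
def piPush {X Y : Type} [TopologicalSpace X] [TopologicalSpace Y] (f : C(X, Y)) (n : ℕ)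
    (x : X) : HomotopyGroup (Fin n) X x → HomotopyGroup (Fin n) Y (f x) :=
  Quotient.map
    (fun p => ⟨f.comp p.1, fun y hy => by
      simp only [ContinuousMap.comp_apply]
      rw [p.2 y hy]⟩)
    (fun p q h => by
      obtain ⟨H⟩ := h
      exact ⟨H.compContinuousMap f⟩)

/-- A continuous map is `m`-connected (in the sense that the pair given by its mapping
cylinder is `m`-connected): it is bijective on `π_j` for `j < m` and surjective on `π_m`,
for all basepoints. -/
def ConnMap {X Y : Type} [TopologicalSpace X] [TopologicalSpace Y] (f : C(X, Y)) (m : ℕ) :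
    Prop :=
  ∀ x : X, (∀ j : ℕ, j ≤ m → Function.Surjective (piPush f j x)) ∧
    ∀ j : ℕ, j < m → Function.Injective (piPush f j x)

/-- The fibre of (the realization of) a map over a point `b`, with the subspace topology,
is `d`-connected. -/
def GSSet.FibreConnAt {G : Type} [Group G] {Y B : GSSet G} (φ : Y.X ⟶ B.X)
    (b : B.T) (d : ℕ) : Prop :=
  DConnSpace {y : Y.T // GSSet.tmap φ y = b} d
-- SIMP chunk: products, simplicial homotopies, lifting-extension problems
open SSet

/-- Binary product of simplicial sets, defined levelwise. -/
def SdProd (X Y : SSet) : SSet where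
  obj m := X.obj m × Y.obj m
  map f := ↾(fun p => (X.map f p.1, Y.map f p.2))
  map_id m := by ext p <;> simp
  map_comp f g := by ext p <;> simp

/-- Product of simplicial maps. -/
def sdMap {X X' Y Y' : SSet} (f : X ⟶ X') (g : Y ⟶ Y') : SdProd X Y ⟶ SdProd X' Y' where
  app m := ↾(fun p => (f.app m p.1, g.app m p.2))
  naturality m m' u := by
    ext p : 3
    change (f.app m' (X.map u p.1), g.app m' (Y.map u p.2)) =
      (X'.map u (f.app m p.1), Y'.map u (g.app m p.2))
    rw [FunctorToTypes.naturality, FunctorToTypes.naturality]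

/-- First projection. -/
def sdFst (X Y : SSet) : SdProd X Y ⟶ X where
  app m := ↾(fun p => p.1)
  naturality _ _ _ := rfl

/-- Second projection. -/
def sdSnd (X Y : SSet) : SdProd X Y ⟶ Y where
  app m := ↾(fun p => p.2)
  naturality _ _ _ := rfl

lemma sdMap_id (X Y : SSet) : sdMap (𝟙 X) (𝟙 Y) = 𝟙 (SdProd X Y) := rfl

lemma sdMap_comp {X X' X'' Y Y' Y'' : SSet} (f : X ⟶ X') (f' : X' ⟶ X'')
    (g : Y ⟶ Y') (g' : Y' ⟶ Y'') :
    sdMap (f ≫ f') (g ≫ g') = sdMap f g ≫ sdMap f' g' := rfl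

lemma std_const_map {n : ℕ} (k : Fin (n + 1)) {m m' : SimplexCategoryᵒᵖ} (u : m ⟶ m') :
    Δ[n].map u (SSet.stdSimplex.const n k m) = SSet.stdSimplex.const n k m' := rfl

/-- The inclusion of `X` at the vertex `k` of `Δ[1] × X`. -/
def vtx (k : Fin 2) (X : SSet) : X ⟶ SdProd Δ[1] X where
  app m := ↾(fun x => (SSet.stdSimplex.const 1 k m, x))
  naturality m m' u := by
    ext x : 3
    change (SSet.stdSimplex.const 1 k m', X.map u x) =
      (Δ[1].map u (SSet.stdSimplex.const 1 k m), X.map u x)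
    rw [std_const_map]

/-- A Kan fibration: right lifting property against all horn inclusions. -/
def IsKanFib {Y B : SSet} (φ : Y ⟶ B) : Prop :=
  ∀ (n : ℕ) (i : Fin (n + 1)) (u : (Λ[n, i] : SSet) ⟶ Y) (v : Δ[n] ⟶ B),
    u ≫ φ = Λ[n, i].ι ≫ v →
      ∃ w : Δ[n] ⟶ Y, Λ[n, i].ι ≫ w = u ∧ w ≫ φ = v

namespace GSSet

variable {G : Type} [Group G]

/-- A simplicial set with trivial `G`-action. -/
def triv (G : Type) [Group G] (X : SSet) : GSSet G where
  X := X
  act :=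
    { toFun := fun _ => 𝟙 X
      map_one' := rfl
      map_mul' := fun _ _ => (Category.comp_id _).symm }

/-- Product of `G`-simplicial sets with the diagonal action. -/
def prod (P Q : GSSet G) : GSSet G where
  X := SdProd P.X Q.X
  act :=
    { toFun := fun g => sdMap (P.a g) (Q.a g)
      map_one' := by
        show sdMap (P.a 1) (Q.a 1) = 𝟙 _
        have h1 : P.a (1 : G) = 𝟙 P.X := P.act.map_one
        have h2 : Q.a (1 : G) = 𝟙 Q.X := Q.act.map_one
        rw [h1, h2, sdMap_id]
      map_mul' := fun g h => by
        show sdMap (P.a (g * h)) (Q.a (g * h)) = _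
        have h1 : P.a (g * h) = P.a h ≫ P.a g := P.act.map_mul g h
        have h2 : Q.a (g * h) = Q.a h ≫ Q.a g := Q.act.map_mul g h
        rw [h1, h2, sdMap_comp]
        rfl }

/-- The data of an (equivariant) lifting-extension problem:
a commutative square `A → Y`, `A ↪ X → B`, `Y → B` of `G`-simplicial sets. -/
structure LEP (G : Type) [Group G] : Type 1 where
  A : GSSet G
  X : GSSet G
  Y : GSSet G
  B : GSSet G
  ι : A.X ⟶ X.X
  f : A.X ⟶ Y.X
  g : X.X ⟶ B.X
  φ : Y.X ⟶ B.X

namespace LEP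

variable (S : LEP G)

/-- The commutativity, equivariance, monomorphism and freeness conditions on a
lifting-extension problem. -/
def IsValid : Prop :=
  S.ι ≫ S.g = S.f ≫ S.φ ∧ (∀ m, Function.Injective (S.ι.app m)) ∧
    IsEqv S.A S.X S.ι ∧ IsEqv S.A S.Y S.f ∧ IsEqv S.X S.B S.g ∧ IsEqv S.Y S.B S.φ

/-- A diagonal of the lifting-extension problem: an equivariant map `ℓ : X → Y` with
`ℓ ∘ ι = f` and `φ ∘ ℓ = g`. -/
def Diag : Type :=
  {ℓ : S.X.X ⟶ S.Y.X // IsEqv S.X S.Y ℓ ∧ S.ι ≫ ℓ = S.f ∧ ℓ ≫ S.φ = S.g}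

/-- Two diagonals are homotopic if they are joined by an equivariant fibrewise simplicial
homotopy `Δ¹ × X → Y` which is constant on `A` (with value prescribed by `f`). -/
def DiagHomotopic (ℓ₀ ℓ₁ : S.Diag) : Prop :=
  ∃ h : SdProd Δ[1] S.X.X ⟶ S.Y.X,
    (∀ g : G, sdMap (𝟙 Δ[1]) (S.X.a g) ≫ h = h ≫ S.Y.a g) ∧
    vtx 0 S.X.X ≫ h = ℓ₀.1 ∧
    vtx 1 S.X.X ≫ h = ℓ₁.1 ∧
    h ≫ S.φ = sdSnd Δ[1] S.X.X ≫ S.g ∧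
    sdMap (𝟙 Δ[1]) S.ι ≫ h = sdSnd Δ[1] S.A.X ≫ S.f

/-- The set `[X,Y]^A_B` of diagonals up to equivariant fibrewise homotopy relative to `A`. -/
def DiagClasses : Type := Quot S.DiagHomotopic

end LEP

end GSSet
-- KE chunk: Eilenberg–MacLane simplicial sets K(π,n), E(π,n) and pullbacks
namespace GSSet

variable {G : Type} [Group G]

/-- Pointwise form of equivariance. -/
lemma eqv_app {P Q : GSSet G} {f : P.X ⟶ Q.X} (hf : IsEqv P Q f) (g : G)
    (m : SimplexCategoryᵒᵖ) (x : P.X.obj m) :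
    f.app m ((P.a g).app m x) = (Q.a g).app m (f.app m x) := by
  have h := types_congr_hom (congrArg (fun η : P.X ⟶ Q.X => η.app m) (hf g)) x
  simpa using h

/-- The simplicial set of (all) `π`-valued `q`-cochains: an `m`-simplex is a function from
the `q`-simplices of `Δ[m]` to `π`. -/
def CochSet (π : Type) [AddCommGroup π] (q : ℕ) : SSet where
  obj m := (SimplexCategory.mk q ⟶ m.unop) → π
  map f := ↾(fun c => fun x => c (x ≫ f.unop))
  map_id m := by ext c x; simp
  map_comp f g := by ext c x; simp

/-- The `G`-action on cochains induced by a `ℤG`-module structure on `π`. -/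
def CochGS (G : Type) [Group G] (π : Type) [AddCommGroup π] [DistribMulAction G π]
    (q : ℕ) : GSSet G where
  X := CochSet π q
  act :=
    { toFun := fun g =>
        { app := fun m => ↾(fun c => fun x => g • c x)
          naturality := fun _ _ _ => rfl }
      map_one' := by
        refine SSet.hom_ext fun m => ?_
        ext c : 3
        show (fun x => (1 : G) • c x) = c
        funext x
        exact one_smul G (c x)
      map_mul' := fun g h => by
        refine SSet.hom_ext fun m => ?_
        ext c : 3
        show (fun x => (g * h) • c x) = (fun x => g • h • c x)
        funext x
        exact mul_smul g h (c x) }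

/-- The simplicial coboundary, as a map of cochain simplicial sets. -/
def cobS (π : Type) [AddCommGroup π] (q : ℕ) : CochSet π q ⟶ CochSet π (q + 1) where
  app m := ↾(fun c => fun y => ∑ i : Fin (q + 2), ((-1 : ℤ) ^ (i : ℕ)) • c (SimplexCategory.δ i ≫ y))
  naturality m m' u := by
    ext c : 3
    funext y
    show ∑ i : Fin (q + 2), ((-1 : ℤ) ^ (i : ℕ)) • c ((SimplexCategory.δ i ≫ y) ≫ u.unop) =
      ∑ i : Fin (q + 2), ((-1 : ℤ) ^ (i : ℕ)) • c (SimplexCategory.δ i ≫ y ≫ u.unop)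
    exact Finset.sum_congr rfl fun i _ => by rw [Category.assoc]

/-- `E(π,q)`: the simplicial subset of normalized cochains (functions vanishing on
degenerate, i.e. non-injective, simplices), as a `G`-simplicial subset. -/
def ESub (G : Type) [Group G] (π : Type) [AddCommGroup π] [DistribMulAction G π] (q : ℕ) :
    GSub (CochGS G π q) where
  mem m := {c | ∀ x : SimplexCategory.mk q ⟶ m.unop,
    ¬ Function.Injective x.toOrderHom → c x = 0}
  map_mem {m m'} f c hc := by
    intro x hx
    show c (x ≫ f.unop) = 0
    refine hc _ (fun hinj => hx ?_)
    intro a b hab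
    refine hinj (show (x ≫ f.unop).toOrderHom a = (x ≫ f.unop).toOrderHom b from ?_)
    change f.unop.toOrderHom (x.toOrderHom a) = f.unop.toOrderHom (x.toOrderHom b)
    rw [hab]
  act_mem g m c hc := by
    intro x hx
    show g • c x = 0
    rw [hc x hx, smul_zero]

/-- `K(π,q)`: the simplicial subset of normalized cocycles, as a `G`-simplicial subset. -/
def KSub (G : Type) [Group G] (π : Type) [AddCommGroup π] [DistribMulAction G π] (q : ℕ) :
    GSub (CochGS G π q) where
  mem m := {c | (∀ x : SimplexCategory.mk q ⟶ m.unop,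
      ¬ Function.Injective x.toOrderHom → c x = 0) ∧
    ∀ y : SimplexCategory.mk (q + 1) ⟶ m.unop,
      ∑ i : Fin (q + 2), ((-1 : ℤ) ^ (i : ℕ)) • c (SimplexCategory.δ i ≫ y) = 0}
  map_mem {m m'} f c hc := by
    constructor
    · intro x hx
      show c (x ≫ f.unop) = 0
      refine hc.1 _ (fun hinj => hx ?_)
      intro a b hab
      refine hinj (show (x ≫ f.unop).toOrderHom a = (x ≫ f.unop).toOrderHom b from ?_)
      change f.unop.toOrderHom (x.toOrderHom a) = f.unop.toOrderHom (x.toOrderHom b)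
      rw [hab]
    · intro y
      show ∑ i : Fin (q + 2), ((-1 : ℤ) ^ (i : ℕ)) • c ((SimplexCategory.δ i ≫ y) ≫ f.unop) = 0
      calc ∑ i : Fin (q + 2), ((-1 : ℤ) ^ (i : ℕ)) • c ((SimplexCategory.δ i ≫ y) ≫ f.unop)
          = ∑ i : Fin (q + 2), ((-1 : ℤ) ^ (i : ℕ)) • c (SimplexCategory.δ i ≫ y ≫ f.unop) :=
            Finset.sum_congr rfl fun i _ => by rw [Category.assoc]
        _ = 0 := hc.2 (y ≫ f.unop)
  act_mem g m c hc := by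
    constructor
    · intro x hx
      show g • c x = 0
      rw [hc.1 x hx, smul_zero]
    · intro y
      show ∑ i : Fin (q + 2), ((-1 : ℤ) ^ (i : ℕ)) • (g • c (SimplexCategory.δ i ≫ y)) = 0
      calc ∑ i : Fin (q + 2), ((-1 : ℤ) ^ (i : ℕ)) • (g • c (SimplexCategory.δ i ≫ y))
          = ∑ i : Fin (q + 2), g • (((-1 : ℤ) ^ (i : ℕ)) • c (SimplexCategory.δ i ≫ y)) :=
            Finset.sum_congr rfl fun i _ =>
              ((DistribMulAction.toAddMonoidHom π g).map_zsmul _ _).symm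
        _ = g • ∑ i : Fin (q + 2), ((-1 : ℤ) ^ (i : ℕ)) • c (SimplexCategory.δ i ≫ y) :=
            (map_sum (DistribMulAction.toAddMonoidHom π g) _ _).symm
        _ = 0 := by rw [hc.2 y, smul_zero]

/-- `E(π,q)` as a `G`-simplicial set. -/
def EG (G : Type) [Group G] (π : Type) [AddCommGroup π] [DistribMulAction G π] (q : ℕ) :
    GSSet G := (ESub G π q).toGSSet

/-- `K(π,q)` as a `G`-simplicial set. -/
def KG (G : Type) [Group G] (π : Type) [AddCommGroup π] [DistribMulAction G π] (q : ℕ) :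
    GSSet G := (KSub G π q).toGSSet

/-- The coboundary fibration `δ : E(π,q) → K(π,q+1)`, expressed with values in the ambient
simplicial set of all cochains. -/
def deltaE (G : Type) [Group G] (π : Type) [AddCommGroup π] [DistribMulAction G π]
    (q : ℕ) : (EG G π q).X ⟶ CochSet π (q + 1) :=
  (ESub G π q).ι ≫ cobS π q

/-- The inclusion `K(π,q) ⊆ (all cochains)`. -/
def kinc (G : Type) [Group G] (π : Type) [AddCommGroup π] [DistribMulAction G π]
    (q : ℕ) : (KG G π q).X ⟶ CochSet π q :=
  (KSub G π q).ι

/-- The pullback of the fibration `δ : E(π,q) → K(π,q+1)` along a map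
`k : Q → K(π,q+1) ⊆ Coch(π,q+1)`, as a `G`-simplicial subset of `Q × E(π,q)`. -/
def PBSub (Q : GSSet G) (π : Type) [AddCommGroup π] [DistribMulAction G π] (q : ℕ)
    (k : Q.X ⟶ CochSet π (q + 1)) (hk : IsEqv Q (CochGS G π (q + 1)) k) :
    GSub (Q.prod (EG G π q)) where
  mem m := {p | k.app m p.1 = (cobS π q).app m p.2.1}
  map_mem {m m'} f p hp := by
    show k.app m' (Q.X.map f p.1) = (cobS π q).app m' ((CochSet π q).map f p.2.1)
    have h1 := NatTrans.naturality_apply k f p.1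
    have h2 := NatTrans.naturality_apply (cobS π q) f p.2.1
    rw [h1, h2, hp]
  act_mem g m p hp := by
    show k.app m ((Q.a g).app m p.1) = (cobS π q).app m (fun x => g • p.2.1 x)
    refine (eqv_app hk g m p.1).trans ?_
    show (fun y => g • (k.app m p.1) y) = _
    funext y
    show g • (k.app m p.1) y = ∑ i : Fin (q + 2), ((-1 : ℤ) ^ (i : ℕ)) •
      (g • p.2.1 (SimplexCategory.δ i ≫ y))
    rw [hp]
    show g • ∑ i : Fin (q + 2), ((-1 : ℤ) ^ (i : ℕ)) • p.2.1 (SimplexCategory.δ i ≫ y) = _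
    calc g • ∑ i : Fin (q + 2), ((-1 : ℤ) ^ (i : ℕ)) • p.2.1 (SimplexCategory.δ i ≫ y)
        = ∑ i : Fin (q + 2), g • (((-1 : ℤ) ^ (i : ℕ)) • p.2.1 (SimplexCategory.δ i ≫ y)) :=
          map_sum (DistribMulAction.toAddMonoidHom π g) _ _
      _ = ∑ i : Fin (q + 2), ((-1 : ℤ) ^ (i : ℕ)) • (g • p.2.1 (SimplexCategory.δ i ≫ y)) :=
          Finset.sum_congr rfl fun i _ =>
            (DistribMulAction.toAddMonoidHom π g).map_zsmul _ _

/-- The pullback `Q ×_{K(π,q+1)} E(π,q)` as a `G`-simplicial set. -/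
def PBG (Q : GSSet G) (π : Type) [AddCommGroup π] [DistribMulAction G π] (q : ℕ)
    (k : Q.X ⟶ CochSet π (q + 1)) (hk : IsEqv Q (CochGS G π (q + 1)) k) : GSSet G :=
  (PBSub Q π q k hk).toGSSet

/-- First projection of the pullback. -/
def pbFst (Q : GSSet G) (π : Type) [AddCommGroup π] [DistribMulAction G π] (q : ℕ)
    (k : Q.X ⟶ CochSet π (q + 1)) (hk : IsEqv Q (CochGS G π (q + 1)) k) :
    (PBG Q π q k hk).X ⟶ Q.X :=
  (PBSub Q π q k hk).ι ≫ sdFst _ _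

/-- Second projection of the pullback, to `E(π,q)`. -/
def pbSnd (Q : GSSet G) (π : Type) [AddCommGroup π] [DistribMulAction G π] (q : ℕ)
    (k : Q.X ⟶ CochSet π (q + 1)) (hk : IsEqv Q (CochGS G π (q + 1)) k) :
    (PBG Q π q k hk).X ⟶ (EG G π q).X :=
  (PBSub Q π q k hk).ι ≫ sdSnd _ _

end GSSet
-- COH chunk: equivariant relative simplicial cochains and cohomology
namespace GSSet

variable {G : Type} [Group G]

/-- The simplicial coboundary operator on `π`-valued cochains of a simplicial set. -/
def cob (P : GSSet G) (π : Type) [AddCommGroup π] (n : ℕ) :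
    ((P.X _⦋n⦌) → π) →+ ((P.X _⦋n + 1⦌) → π) :=
  AddMonoidHom.mk'
    (fun c x => ∑ i : Fin (n + 2), ((-1 : ℤ) ^ (i : ℕ)) • c (P.X.δ i x))
    (by
      intro a b
      funext x
      simp [smul_add, Finset.sum_add_distrib])

/-- The subgroup of cochains that are equivariant and vanish on `A`. -/
def eqvRelCochain (P : GSSet G) (A : GSub P) (π : Type) [AddCommGroup π]
    [DistribMulAction G π] (n : ℕ) : AddSubgroup ((P.X _⦋n⦌) → π) where
  carrier := {c | (∀ (g : G) (x : P.X _⦋n⦌),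
      c ((P.a g).app (Opposite.op (SimplexCategory.mk n)) x) = g • c x) ∧
    ∀ x : P.X _⦋n⦌, x ∈ A.mem (Opposite.op (SimplexCategory.mk n)) → c x = 0}
  add_mem' := by
    rintro a b ⟨ha1, ha2⟩ ⟨hb1, hb2⟩
    exact ⟨fun g x => by simp [ha1 g x, hb1 g x, smul_add],
      fun x hx => by simp [ha2 x hx, hb2 x hx]⟩
  zero_mem' := ⟨fun g x => by simp, fun x hx => rfl⟩
  neg_mem' := by
    rintro a ⟨h1, h2⟩
    exact ⟨fun g x => by simp [h1 g x], fun x hx => by simp [h2 x hx]⟩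

/-- Equivariant relative cocycles. -/
def relCocycles (P : GSSet G) (A : GSub P) (π : Type) [AddCommGroup π]
    [DistribMulAction G π] (n : ℕ) : AddSubgroup ((P.X _⦋n⦌) → π) :=
  eqvRelCochain P A π n ⊓ (cob P π n).ker

/-- Equivariant relative coboundaries. -/
def relCoboundaries (P : GSSet G) (A : GSub P) (π : Type) [AddCommGroup π]
    [DistribMulAction G π] : (n : ℕ) → AddSubgroup ((P.X _⦋n⦌) → π) := fun n => match n with
  | 0 => ⊥
  | (n + 1) => AddSubgroup.map (cob P π n) (eqvRelCochain P A π n)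

/-- The equivariant relative cohomology group `H^n_G(X, A; π)` (cocycles modulo
coboundaries). -/
def HG (P : GSSet G) (A : GSub P) (π : Type) [AddCommGroup π] [DistribMulAction G π]
    (n : ℕ) : Type :=
  relCocycles P A π n ⧸ (relCoboundaries P A π n).addSubgroupOf (relCocycles P A π n)

instance (P : GSSet G) (A : GSub P) (π : Type) [AddCommGroup π] [DistribMulAction G π]
    (n : ℕ) : AddCommGroup (HG P A π n) :=
  QuotientAddGroup.Quotient.addCommGroup _

end GSSet


-- AUX chunk: normalization via Dold-Kan machinery
namespace EML6

open GSSet AlgebraicTopology AlgebraicTopology.DoldKan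
open scoped DoldKan

variable {G : Type} [Group G] {π : Type} [AddCommGroup π] [DistribMulAction G π]
variable (X : GSSet G) (A : GSub X)

/-- The span of the `A`-simplices inside the free `ℤ`-module on the `m`-simplices of `X`. -/
def SA (m : SimplexCategoryᵒᵖ) : Submodule ℤ (X.X.obj m →₀ ℤ) :=
  Submodule.span ℤ ((fun x => Finsupp.single x (1 : ℤ)) '' A.mem m)

/-- The relative chain group `ℤ[X_m]/ℤ[A_m]`. -/
abbrev QA (m : SimplexCategoryᵒᵖ) : Type := (X.X.obj m →₀ ℤ) ⧸ SA X A m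

/-- The generator of `QA` corresponding to a simplex. -/
def gen {m : SimplexCategoryᵒᵖ} (x : X.X.obj m) : QA X A m :=
  (SA X A m).mkQ (Finsupp.single x 1)

lemma gen_eq_zero {m : SimplexCategoryᵒᵖ} {x : X.X.obj m} (hx : x ∈ A.mem m) :
    gen X A x = 0 := by
  show ((SA X A m).mkQ) _ = 0
  rw [Submodule.mkQ_apply, Submodule.Quotient.mk_eq_zero]
  exact Submodule.subset_span ⟨x, hx, rfl⟩

lemma qext {m : SimplexCategoryᵒᵖ} {N : Type} [AddCommGroup N] [Module ℤ N]
    {f g : QA X A m →ₗ[ℤ] N}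
    (h : ∀ x : X.X.obj m, f (gen X A x) = g (gen X A x)) : f = g := by
  refine Submodule.linearMap_qext _ (Finsupp.lhom_ext fun a b => ?_)
  have hb : Finsupp.single a b = b • Finsupp.single a (1 : ℤ) := by
    rw [Finsupp.smul_single, smul_eq_mul, mul_one]
  have hm : (SA X A m).mkQ (Finsupp.single a b) = b • gen X A a := by
    rw [hb, map_smul]; rfl
  simp only [LinearMap.comp_apply, hm]
  rw [LinearMap.map_smul, LinearMap.map_smul, h a]

/-- The map on relative chains induced by a simplex map respecting `A`. -/
def qmap {m m' : SimplexCategoryᵒᵖ} (f : X.X.obj m → X.X.obj m')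
    (hf : ∀ x ∈ A.mem m, f x ∈ A.mem m') : QA X A m →ₗ[ℤ] QA X A m' :=
  Submodule.liftQ _ ((SA X A m').mkQ.comp (Finsupp.lmapDomain ℤ ℤ f)) (by
    rw [SA, Submodule.span_le]
    rintro _ ⟨x, hx, rfl⟩
    simp only [SetLike.mem_coe, LinearMap.mem_ker, LinearMap.comp_apply,
      Finsupp.lmapDomain_apply, Finsupp.mapDomain_single, Submodule.mkQ_apply,
      Submodule.Quotient.mk_eq_zero]
    exact Submodule.subset_span ⟨f x, hf x hx, rfl⟩)

@[simp] lemma qmap_gen {m m' : SimplexCategoryᵒᵖ} (f : X.X.obj m → X.X.obj m')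
    (hf : ∀ x ∈ A.mem m, f x ∈ A.mem m') (x : X.X.obj m) :
    qmap X A f hf (gen X A x) = gen X A (f x) := by
  show Submodule.liftQ _ _ _ ((SA X A m).mkQ (Finsupp.single x 1)) = _
  rw [Submodule.mkQ_apply, Submodule.liftQ_apply]
  simp only [LinearMap.comp_apply, Finsupp.lmapDomain_apply, Finsupp.mapDomain_single]
  rfl

/-- Linear extension of a `π`-valued cochain vanishing on `A`. -/
def bar {m : SimplexCategoryᵒᵖ} (cf : X.X.obj m → π) (h0 : ∀ x ∈ A.mem m, cf x = 0) :
    QA X A m →ₗ[ℤ] π :=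
  Submodule.liftQ _ (Finsupp.linearCombination ℤ cf) (by
    rw [SA, Submodule.span_le]
    rintro _ ⟨x, hx, rfl⟩
    simp only [SetLike.mem_coe, LinearMap.mem_ker, Finsupp.linearCombination_single, one_smul]
    exact h0 x hx)

@[simp] lemma bar_gen {m : SimplexCategoryᵒᵖ} (cf : X.X.obj m → π)
    (h0 : ∀ x ∈ A.mem m, cf x = 0) (x : X.X.obj m) :
    bar X A cf h0 (gen X A x) = cf x := by
  show Submodule.liftQ _ _ _ ((SA X A m).mkQ (Finsupp.single x 1)) = _
  rw [Submodule.mkQ_apply, Submodule.liftQ_apply, Finsupp.linearCombination_single, one_smul]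

/-- The `G`-representation on relative chains. -/
def rho (m : SimplexCategoryᵒᵖ) : Representation ℤ G (QA X A m) where
  toFun g := qmap X A ((X.a g).app m) (fun x hx => A.act_mem g m x hx)
  map_one' := by
    refine qext X A fun x => ?_
    have h1 : X.a (1 : G) = 𝟙 X.X := X.act.map_one
    simp only [qmap_gen]
    rw [h1]
    rfl
  map_mul' g h := by
    refine qext X A fun x => ?_
    have h1 : X.a (g * h) = X.a h ≫ X.a g := X.act.map_mul g h
    simp only [Module.End.mul_apply, qmap_gen]
    rw [h1]
    rfl

@[simp] lemma rho_gen (g : G) {m : SimplexCategoryᵒᵖ} (x : X.X.obj m) :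
    rho X A m g (gen X A x) = gen X A ((X.a g).app m x) :=
  qmap_gen X A ((X.a g).app m) (fun x hx => A.act_mem g m x hx) x

/-- The relative chain simplicial object in `Rep ℤ G`. -/
def Y : CategoryTheory.SimplicialObject (Rep ℤ G) where
  obj m := Rep.of (rho X A m)
  map {m m'} f :=
    Rep.ofHom ⟨qmap X A (X.X.map f) (fun x hx => A.map_mem f x hx),
      fun g => by
        refine qext X A fun x => ?_
        show qmap X A (X.X.map f) (fun x hx => A.map_mem f x hx)
            (rho X A m g (gen X A x)) =
          rho X A m' g (qmap X A (X.X.map f) (fun x hx => A.map_mem f x hx) (gen X A x))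
        simp only [rho_gen, qmap_gen]
        exact congrArg (gen X A) (NatTrans.naturality_apply (X.a g) f x).symm⟩
  map_id m := by
    apply Rep.hom_ext
    apply Representation.IntertwiningMap.ext
    refine qext X A fun x => ?_
    show qmap X A (X.X.map (𝟙 m)) (fun x hx => A.map_mem (𝟙 m) x hx) (gen X A x) = gen X A x
    rw [qmap_gen, FunctorToTypes.map_id_apply]
  map_comp {m m' m''} f f' := by
    apply Rep.hom_ext
    apply Representation.IntertwiningMap.ext
    refine qext X A fun x => ?_
    show qmap X A (X.X.map (f ≫ f')) (fun x hx => A.map_mem (f ≫ f') x hx) (gen X A x) =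
      (qmap X A (X.X.map f') (fun x hx => A.map_mem f' x hx))
        ((qmap X A (X.X.map f) (fun x hx => A.map_mem f x hx)) (gen X A x))
    simp only [qmap_gen, FunctorToTypes.map_comp_apply]

lemma Y_map_gen {m m' : SimplexCategoryᵒᵖ} (f : m ⟶ m') (x : X.X.obj m) :
    ((Y X A).map f).hom (gen X A x) = gen X A (X.X.map f x) :=
  qmap_gen X A (X.X.map f) (fun x hx => A.map_mem f x hx) x

lemma Y_σ_gen {k : ℕ} (i : Fin (k + 1)) (y : X.X _⦋k⦌) :
    ((Y X A).σ i).hom (gen X A y) = gen X A (X.X.σ i y) :=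
  Y_map_gen X A _ y

lemma Y_ρ (m : SimplexCategoryᵒᵖ) (g : G) (q : QA X A m) :
    ((Y X A).obj m).ρ g q = rho X A m g q := rfl

/-- Extracting underlying morphisms additively. -/
def homAdd (M N : Rep ℤ G) : (M ⟶ N) →+ (M.V → N.V) :=
  AddMonoidHom.mk' (fun f => ⇑f.hom) (fun f g => by rw [Rep.add_hom]; rfl)

/-- Evaluation of `ModuleCat ℤ` morphisms at a point, additively. -/
def evalAdd {M N : Rep ℤ G} (q : M.V) : (M.V → N.V) →+ N.V :=
  AddMonoidHom.mk' (fun f => f q) (fun _ _ => rfl)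

lemma d_gen (k : ℕ) (x : X.X _⦋k + 1⦌) :
    (K[Y X A].d (k + 1) k).hom (gen X A x) =
      ∑ i : Fin (k + 2), ((-1 : ℤ) ^ (i : ℕ)) • gen X A (X.X.δ i x) := by
  have hd := AlternatingFaceMapComplex.obj_d_eq (Y X A) k
  have h2 : ⇑(K[Y X A].d (k + 1) k).hom =
      ∑ i : Fin (k + 2), ((-1 : ℤ) ^ (i : ℕ)) • ⇑((Y X A).δ i).hom := by
    rw [show ⇑(K[Y X A].d (k + 1) k).hom = homAdd _ _ (K[Y X A].d (k + 1) k) from rfl, hd,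
      map_sum]
    refine Finset.sum_congr rfl fun i _ => ?_
    exact AddMonoidHom.map_zsmul (homAdd _ _) _ _
  rw [h2]
  let ev := evalAdd (M := ((Y X A).obj (op ⦋k + 1⦌))) (N := ((Y X A).obj (op ⦋k⦌)))
    (gen X A x)
  refine (map_sum ev (fun i : Fin (k + 2) => ((-1 : ℤ) ^ (i : ℕ)) • ⇑((Y X A).δ i).hom)
    Finset.univ).trans ?_
  refine Finset.sum_congr rfl fun i _ => ?_
  refine (AddMonoidHom.map_zsmul ev _ _).trans ?_
  exact congrArg (fun q => ((-1 : ℤ) ^ (i : ℕ)) • q) (Y_map_gen X A _ x)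

lemma cob_eq_d {k : ℕ} (Ψ : QA X A (op ⦋k⦌) →ₗ[ℤ] π) (x : X.X _⦋k + 1⦌) :
    cob X π k (fun w => Ψ (gen X A w)) x =
      Ψ ((K[Y X A].d (k + 1) k).hom (gen X A x)) := by
  erw [d_gen, map_sum]
  show ∑ i : Fin (k + 2), ((-1 : ℤ) ^ (i : ℕ)) • Ψ (gen X A (X.X.δ i x)) = _
  exact Finset.sum_congr rfl fun i _ => (map_zsmul Ψ _ _).symm

/-- Evaluation of `Rep` morphisms at a point, additively. -/
def evalRep {M N : Rep ℤ G} (q : M.V) : (M ⟶ N) →+ N.V :=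
  (evalAdd q).comp (homAdd M N)

lemma repComp_apply {M N P : Rep ℤ G} (f : M ⟶ N) (g : N ⟶ P) (q : M.V) :
    (f ≫ g).hom q = g.hom (f.hom q) := by
  rfl

lemma repAdd_apply {M N : Rep ℤ G} (f g : M ⟶ N) (q : M.V) :
    (f + g).hom q = f.hom q + g.hom q :=
  map_add (evalRep q) f g

lemma repZero_apply {M N : Rep ℤ G} (q : M.V) : (0 : M ⟶ N).hom q = 0 := by
  rfl

lemma comp_σ_zero {k : ℕ} (Ψ : QA X A (op ⦋k + 1⦌) →ₗ[ℤ] π)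
    (hσ : ∀ (i : Fin (k + 1)) (y : X.X _⦋k⦌), Ψ (gen X A (X.X.σ i y)) = 0)
    (i : Fin (k + 1)) (q : QA X A (op ⦋k⦌)) :
    Ψ (((Y X A).σ i).hom q) = 0 := by
  have h : Ψ.comp (((Y X A).σ i).hom.toLinearMap : QA X A (op ⦋k⦌) →ₗ[ℤ] QA X A (op ⦋k + 1⦌)) = 0 := by
    refine qext X A fun y => ?_
    show Ψ (((Y X A).σ i).hom (gen X A y)) = 0
    rw [Y_σ_gen]
    exact hσ i y
  exact LinearMap.congr_fun h q

lemma comp_PInfty_self {k : ℕ} (Ψ : QA X A (op ⦋k + 1⦌) →ₗ[ℤ] π)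
    (hσ : ∀ (i : Fin (k + 1)) (y : X.X _⦋k⦌), Ψ (gen X A (X.X.σ i y)) = 0)
    (q : QA X A (op ⦋k + 1⦌)) :
    Ψ (((PInfty : K[Y X A] ⟶ K[Y X A]).f (k + 1)).hom q) = Ψ q := by
  have hQ : Ψ (evalRep q ((Q (k + 1) : K[Y X A] ⟶ K[Y X A]).f (k + 1))) = 0 := by
    erw [decomposition_Q k (k + 1), map_sum, map_sum Ψ]
    refine Finset.sum_eq_zero fun i _ => ?_
    have h2 : evalRep (N := K[Y X A].X (k + 1)) q
        ((P (i : ℕ) : K[Y X A] ⟶ K[Y X A]).f (k + 1) ≫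
          ((Y X A).δ i.rev.succ ≫ (Y X A).σ i.rev)) =
        ((Y X A).σ i.rev).hom
          (((Y X A).δ i.rev.succ).hom
            (((P (i : ℕ) : K[Y X A] ⟶ K[Y X A]).f (k + 1)).hom q)) := by
      show ((P (i : ℕ) : K[Y X A] ⟶ K[Y X A]).f (k + 1) ≫
        ((Y X A).δ i.rev.succ ≫ (Y X A).σ i.rev)).hom q = _
      erw [repComp_apply, repComp_apply]
    rw [h2]
    exact comp_σ_zero X A Ψ hσ i.rev _

  have hPQ : (PInfty : K[Y X A] ⟶ K[Y X A]).f (k + 1) =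
      𝟙 (K[Y X A].X (k + 1)) - (Q (k + 1) : K[Y X A] ⟶ K[Y X A]).f (k + 1) := by
    rw [PInfty_f, Q]
    simp only [HomologicalComplex.sub_f_apply, HomologicalComplex.id_f]
    abel
  have h3 := congrArg (evalRep (N := K[Y X A].X (k + 1)) q) hPQ
  rw [map_sub] at h3
  have hid : evalRep (N := K[Y X A].X (k + 1)) q (𝟙 (K[Y X A].X (k + 1))) = q := rfl
  rw [hid] at h3
  show Ψ (evalRep q ((PInfty : K[Y X A] ⟶ K[Y X A]).f (k + 1))) = Ψ q
  erw [h3, map_sub Ψ, hQ, sub_zero]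

lemma sigma_comp_PInfty_zero {k : ℕ} (i : Fin (k + 1)) (q : QA X A (op ⦋k⦌)) :
    ((PInfty : K[Y X A] ⟶ K[Y X A]).f (k + 1)).hom (((Y X A).σ i).hom q) = 0 := by
  have h := σ_comp_PInfty (Y X A) (n := k) i
  have h2 := congrArg (fun (f : (Y X A) _⦋k⦌ ⟶ (Y X A) _⦋k + 1⦌) => f.hom q) h
  erw [repComp_apply] at h2
  exact h2.trans (repZero_apply (M := (Y X A) _⦋k⦌) (N := (Y X A) _⦋k + 1⦌) q)

lemma P_d (k : ℕ) (q : QA X A (op ⦋k + 1⦌)) :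
    ((PInfty : K[Y X A] ⟶ K[Y X A]).f k).hom ((K[Y X A].d (k + 1) k).hom q) =
      (K[Y X A].d (k + 1) k).hom
        (((PInfty : K[Y X A] ⟶ K[Y X A]).f (k + 1)).hom q) := by
  have h := (PInfty : K[Y X A] ⟶ K[Y X A]).comm (k + 1) k
  have h2 := congrArg (fun (f : K[Y X A].X (k + 1) ⟶ K[Y X A].X k) => f.hom q) h
  erw [repComp_apply, repComp_apply] at h2
  exact h2.symm

lemma σ_not_inj {k : ℕ} (i : Fin (k + 1)) :
    ¬Function.Injective (SimplexCategory.σ i).toOrderHom := by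
  intro h
  have h2 : (SimplexCategory.σ i).toOrderHom (Fin.castSucc i) =
      (SimplexCategory.σ i).toOrderHom (Fin.succ i) := by
    show Fin.predAbove i (Fin.castSucc i) = Fin.predAbove i (Fin.succ i)
    rw [Fin.predAbove_castSucc_self, Fin.predAbove_succ_self]
  exact absurd (h h2) (Fin.ne_of_lt (Fin.castSucc_lt_succ : Fin.castSucc i < Fin.succ i))

/-- The empty simplicial subset. -/
def emptyGSub : GSub X where
  mem _ := ∅
  map_mem _ x h := absurd h (Set.notMem_empty x)
  act_mem _ _ x h := absurd h (Set.notMem_empty x)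

lemma cob_vanish_deg (k : ℕ) (c : X.X _⦋k⦌ → π)
    (hdeg : ∀ (Δ' : SimplexCategory) (f : (⦋k⦌ : SimplexCategory) ⟶ Δ')
      (x : X.X.obj (op Δ')), ¬Function.Injective f.toOrderHom → c (X.X.map f.op x) = 0)
    (j : Fin (k + 1)) (y : X.X _⦋k⦌) :
    cob X π k c (X.X.σ j y) = 0 := by
  set E := emptyGSub X with hE
  let cb : QA X E (op ⦋k⦌) →ₗ[ℤ] π :=
    bar X E c (fun x hx => absurd hx (Set.notMem_empty x))
  have hfun : (fun w => cb (gen X E w)) = c :=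
    funext fun w => bar_gen X E c _ w
  rw [← hfun, cob_eq_d X E cb (X.X.σ j y), ← Y_σ_gen X E j y]
  have hcb_P : ∀ q : QA X E (op ⦋k⦌),
      cb (((PInfty : K[Y X E] ⟶ K[Y X E]).f k).hom q) = cb q := by
    cases k with
    | zero =>
      intro q
      rw [PInfty_f_0]
      rfl
    | succ m =>
      refine comp_PInfty_self X E cb ?_
      intro i y'
      rw [bar_gen]
      exact hdeg _ (SimplexCategory.σ i) y' (σ_not_inj i)
  erw [← hcb_P, P_d, sigma_comp_PInfty_zero X E j (gen X E y), map_zero, map_zero]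

lemma cob_cob (k : ℕ) (c : X.X _⦋k⦌ → π) :
    cob X π (k + 1) (cob X π k c) = 0 := by
  set E := emptyGSub X with hE
  let cb : QA X E (op ⦋k⦌) →ₗ[ℤ] π :=
    bar X E c (fun x hx => absurd hx (Set.notMem_empty x))
  let dh : QA X E (op ⦋k + 1⦌) →ₗ[ℤ] QA X E (op ⦋k⦌) :=
    ((K[Y X E].d (k + 1) k).hom.toLinearMap : QA X E (op ⦋k + 1⦌) →ₗ[ℤ] QA X E (op ⦋k⦌))
  have hfun : (fun w => cb (gen X E w)) = c :=
    funext fun w => bar_gen X E c _ w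
  have hc : cob X π k c = fun w => (cb.comp dh) (gen X E w) := by
    funext w
    rw [← hfun]
    exact cob_eq_d X E cb w
  funext x
  rw [hc, cob_eq_d X E (cb.comp dh) x]
  have hdd : dh ((K[Y X E].d (k + 2) (k + 1)).hom (gen X E x)) = 0 := by
    have h := K[Y X E].d_comp_d (k + 2) (k + 1) k
    have h2 := congrArg
      (fun (f : K[Y X E].X (k + 2) ⟶ K[Y X E].X k) => f.hom (gen X E x)) h
    erw [repComp_apply] at h2
    exact h2.trans (repZero_apply _)
  erw [LinearMap.comp_apply]
  show cb (dh _) = (0 : X.X _⦋k + 2⦌ → π) x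
  rw [hdd, map_zero]
  rfl

lemma key (n : ℕ) (u : X.X _⦋n + 1⦌ → π) (v : X.X _⦋n⦌ → π)
    (hue : ∀ (g : G) (x : X.X _⦋n + 1⦌),
      u ((X.a g).app (op ⦋n + 1⦌) x) = g • u x)
    (huA : ∀ x ∈ A.mem (op ⦋n + 1⦌), u x = 0)
    (hucob : cob X π (n + 1) u = 0)
    (hudeg : ∀ (i : Fin (n + 1)) (y : X.X _⦋n⦌), u (X.X.σ i y) = 0)
    (hve : ∀ (g : G) (x : X.X _⦋n⦌), v ((X.a g).app (op ⦋n⦌) x) = g • v x)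
    (hvA : ∀ x ∈ A.mem (op ⦋n⦌), v x = 0)
    (hvcob : cob X π n v = u) :
    ∃ w : X.X _⦋n⦌ → π,
      (∀ (g : G) (x : X.X _⦋n⦌), w ((X.a g).app (op ⦋n⦌) x) = g • w x) ∧
      (∀ x ∈ A.mem (op ⦋n⦌), w x = 0) ∧
      (∀ (Δ' : SimplexCategory) (f : (⦋n⦌ : SimplexCategory) ⟶ Δ')
        (x : X.X.obj (op Δ')), ¬Function.Injective f.toOrderHom →
          w (X.X.map f.op x) = 0) ∧
      cob X π n w = u := by
  classical
  let ub : QA X A (op ⦋n + 1⦌) →ₗ[ℤ] π := bar X A u huA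
  let vb : QA X A (op ⦋n⦌) →ₗ[ℤ] π := bar X A v hvA
  let Hh : QA X A (op ⦋n⦌) →ₗ[ℤ] QA X A (op ⦋n + 1⦌) :=
    (((homotopyPInftyToId (Y X A)).hom n (n + 1)).hom.toLinearMap :
      QA X A (op ⦋n⦌) →ₗ[ℤ] QA X A (op ⦋n + 1⦌))
  let H2 : QA X A (op ⦋n + 1⦌) →ₗ[ℤ] QA X A (op ⦋n + 2⦌) :=
    (((homotopyPInftyToId (Y X A)).hom (n + 1) (n + 2)).hom.toLinearMap :
      QA X A (op ⦋n + 1⦌) →ₗ[ℤ] QA X A (op ⦋n + 2⦌))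
  let Pn : QA X A (op ⦋n⦌) →ₗ[ℤ] QA X A (op ⦋n⦌) :=
    (((PInfty : K[Y X A] ⟶ K[Y X A]).f n).hom.toLinearMap :
      QA X A (op ⦋n⦌) →ₗ[ℤ] QA X A (op ⦋n⦌))
  let P1 : QA X A (op ⦋n + 1⦌) →ₗ[ℤ] QA X A (op ⦋n + 1⦌) :=
    (((PInfty : K[Y X A] ⟶ K[Y X A]).f (n + 1)).hom.toLinearMap :
      QA X A (op ⦋n + 1⦌) →ₗ[ℤ] QA X A (op ⦋n + 1⦌))
  let d1 : QA X A (op ⦋n + 1⦌) →ₗ[ℤ] QA X A (op ⦋n⦌) :=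
    ((K[Y X A].d (n + 1) n).hom.toLinearMap : QA X A (op ⦋n + 1⦌) →ₗ[ℤ] QA X A (op ⦋n⦌))
  let d2 : QA X A (op ⦋n + 2⦌) →ₗ[ℤ] QA X A (op ⦋n + 1⦌) :=
    ((K[Y X A].d (n + 2) (n + 1)).hom.toLinearMap : QA X A (op ⦋n + 2⦌) →ₗ[ℤ] QA X A (op ⦋n + 1⦌))
  let Φ : QA X A (op ⦋n⦌) →ₗ[ℤ] π := (vb - ub.comp Hh).comp Pn
  -- basic identities
  have hvb_d : ∀ q : QA X A (op ⦋n + 1⦌), vb (d1 q) = ub q := by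
    have h : vb.comp d1 = ub := by
      refine qext X A fun x => ?_
      have h1 : (fun w => vb (gen X A w)) = v := funext fun w => bar_gen X A v hvA w
      calc vb.comp d1 (gen X A x) = cob X π n (fun w => vb (gen X A w)) x :=
            (cob_eq_d X A vb x).symm
        _ = u x := by rw [h1, hvcob]
        _ = ub (gen X A x) := (bar_gen X A u huA x).symm
    exact fun q => LinearMap.congr_fun h q
  have hub_d2 : ∀ q : QA X A (op ⦋n + 2⦌), ub (d2 q) = 0 := by
    have h : ub.comp d2 = 0 := by
      refine qext X A fun x => ?_
      have h1 : (fun w => ub (gen X A w)) = u := funext fun w => bar_gen X A u huA w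
      calc ub.comp d2 (gen X A x) = cob X π (n + 1) (fun w => ub (gen X A w)) x :=
            (cob_eq_d X A ub x).symm
        _ = 0 := by rw [h1, hucob]; rfl
    exact fun q => LinearMap.congr_fun h q
  have hub_P : ∀ q : QA X A (op ⦋n + 1⦌), ub (P1 q) = ub q := by
    refine comp_PInfty_self X A ub fun i y => ?_
    rw [bar_gen]
    exact hudeg i y
  have hPd : ∀ q : QA X A (op ⦋n + 1⦌), Pn (d1 q) = d1 (P1 q) := fun q => P_d X A n q
  have hHcomm : ∀ q : QA X A (op ⦋n + 1⦌), P1 q = Hh (d1 q) + d2 (H2 q) + q := by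
    intro q
    have h := (homotopyPInftyToId (Y X A)).comm (n + 1)
    rw [Homotopy.dNext_succ_chainComplex, Homotopy.prevD_chainComplex] at h
    have h2 := congrArg
      (fun (f : K[Y X A].X (n + 1) ⟶ K[Y X A].X (n + 1)) => f.hom q) h
    replace h2 := h2.trans ((repAdd_apply (M := K[Y X A].X (n + 1)) _ _ q).trans
      (congrArg₂ (· + ·) ((repAdd_apply (M := K[Y X A].X (n + 1)) _ _ q).trans
        (congrArg₂ (· + ·) (repComp_apply (M := K[Y X A].X (n + 1)) _ _ q)
          (repComp_apply (M := K[Y X A].X (n + 1)) _ _ q))) rfl))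
    have hid : ((𝟙 K[Y X A] : K[Y X A] ⟶ K[Y X A]).f (n + 1)).hom q = q := by
      rw [HomologicalComplex.id_f]
      rfl
    erw [hid] at h2
    exact h2
  have hidem : ∀ q : QA X A (op ⦋n + 1⦌), P1 (P1 q) = P1 q := by
    intro q
    have h := PInfty_f_idem (X := Y X A) (n + 1)
    have h2 := congrArg
      (fun (f : K[Y X A].X (n + 1) ⟶ K[Y X A].X (n + 1)) => f.hom q) h
    erw [repComp_apply] at h2
    exact h2
  refine ⟨fun x => Φ (gen X A x), ?_, ?_, ?_, ?_⟩
  · -- equivariance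
    intro g x
    have hPn_c : ∀ q, Pn (rho X A (op ⦋n⦌) g q) = rho X A (op ⦋n⦌) g (Pn q) := fun q =>
      Rep.hom_comm_apply ((PInfty : K[Y X A] ⟶ K[Y X A]).f n) g q
    have hHh_c : ∀ q, Hh (rho X A (op ⦋n⦌) g q) = rho X A (op ⦋n + 1⦌) g (Hh q) := fun q =>
      Rep.hom_comm_apply ((homotopyPInftyToId (Y X A)).hom n (n + 1)) g q
    have hub_c : ∀ q, ub (rho X A (op ⦋n + 1⦌) g q) = g • ub q := by
      have h : (bar X A u huA).comp (rho X A (op ⦋n + 1⦌) g) =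
          ((DistribMulAction.toAddMonoidHom π g).toIntLinearMap).comp (bar X A u huA) := by
        refine qext X A fun x => ?_
        simp only [LinearMap.comp_apply, rho_gen, bar_gen]
        exact hue g x
      exact fun q => LinearMap.congr_fun h q
    have hvb_c : ∀ q, vb (rho X A (op ⦋n⦌) g q) = g • vb q := by
      have h : (bar X A v hvA).comp (rho X A (op ⦋n⦌) g) =
          ((DistribMulAction.toAddMonoidHom π g).toIntLinearMap).comp (bar X A v hvA) := by
        refine qext X A fun x => ?_
        simp only [LinearMap.comp_apply, rho_gen, bar_gen]
        exact hve g x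
      exact fun q => LinearMap.congr_fun h q
    show Φ (gen X A ((X.a g).app (op ⦋n⦌) x)) = g • Φ (gen X A x)
    rw [← rho_gen]
    show (vb - ub.comp Hh) (Pn (rho X A (op ⦋n⦌) g (gen X A x))) = _
    rw [hPn_c]
    rw [LinearMap.sub_apply, LinearMap.comp_apply, hvb_c, hHh_c, hub_c]
    rw [← smul_sub]
    rfl
  · -- vanishing on A
    intro x hx
    show Φ (gen X A x) = 0
    rw [gen_eq_zero X A hx, map_zero]
  · -- normalization
    intro Δ' f x hf
    cases n with
    | zero =>
      have hs : Subsingleton (Fin ((⦋0⦌ : SimplexCategory).len + 1)) := by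
        rw [SimplexCategory.len_mk]
        exact ⟨fun a b => Fin.ext (by omega)⟩
      exact absurd (fun a b _ => @Subsingleton.elim _ hs a b) hf
    | succ m =>
      obtain ⟨i, θ, rfl⟩ := SimplexCategory.eq_σ_comp_of_not_injective f hf
      have hxy : X.X.map (SimplexCategory.σ i ≫ θ).op x =
          X.X.σ i (X.X.map θ.op x) := by
        rw [op_comp, FunctorToTypes.map_comp_apply]
        rfl
      rw [hxy]
      show (vb - ub.comp Hh) (Pn (gen X A (X.X.σ i (X.X.map θ.op x)))) = 0
      rw [← Y_σ_gen X A i (X.X.map θ.op x)]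
      have hz : Pn (((Y X A).σ i).hom (gen X A (X.X.map θ.op x))) = 0 :=
        sigma_comp_PInfty_zero X A i (gen X A (X.X.map θ.op x))
      rw [hz, map_zero]
  · -- coboundary
    funext x
    rw [cob_eq_d X A Φ x]
    show (vb - ub.comp Hh) (Pn (d1 (gen X A x))) = u x
    rw [hPd]
    set z' : QA X A (op ⦋n + 1⦌) := P1 (gen X A x) with hz'
    have h5 := hHcomm z'
    rw [hidem (gen X A x)] at h5
    have h6 : Hh (d1 z') + d2 (H2 z') = 0 := (right_eq_add.mp h5)
    have h7 : Hh (d1 z') = -(d2 (H2 z')) := eq_neg_of_add_eq_zero_left h6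
    rw [LinearMap.sub_apply, LinearMap.comp_apply, hvb_d, h7, map_neg, hub_d2,
      neg_zero, sub_zero, hub_P, bar_gen]

open Classical in
/-- The cochain on `X` induced by a map `A → E(π,n)`, extended by zero. -/
def gam (n : ℕ) (c : (GSub.toGSSet A).X ⟶ (EG G π n).X) : X.X _⦋n⦌ → π := fun x =>
  if h : x ∈ A.mem (op ⦋n⦌) then (c.app (op ⦋n⦌) ⟨x, h⟩).1 (𝟙 (⦋n⦌ : SimplexCategory)) else 0

lemma gam_mem (n : ℕ) (c : (GSub.toGSSet A).X ⟶ (EG G π n).X) {x : X.X _⦋n⦌}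
    (h : x ∈ A.mem (op ⦋n⦌)) :
    gam X A n c x = (c.app (op ⦋n⦌) ⟨x, h⟩).1 (𝟙 (⦋n⦌ : SimplexCategory)) := dif_pos h

lemma gam_not_mem (n : ℕ) (c : (GSub.toGSSet A).X ⟶ (EG G π n).X) {x : X.X _⦋n⦌}
    (h : x ∉ A.mem (op ⦋n⦌)) : gam X A n c x = 0 := dif_neg h

lemma e_nat (n : ℕ) {W : SSet} (cmap : W ⟶ (EG G π n).X) {m m' : SimplexCategoryᵒᵖ}
    (f : m ⟶ m') (x : W.obj m) (u : (⦋n⦌ : SimplexCategory) ⟶ m'.unop) :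
    (cmap.app m' (W.map f x)).1 u = (cmap.app m x).1 (u ≫ f.unop) :=
  congr_fun (congrArg Subtype.val (NatTrans.naturality_apply cmap f x)) u

lemma k_nat (q : ℕ) {W : SSet} (zmap : W ⟶ (KG G π q).X) {m m' : SimplexCategoryᵒᵖ}
    (f : m ⟶ m') (x : W.obj m) (u : (⦋q⦌ : SimplexCategory) ⟶ m'.unop) :
    (zmap.app m' (W.map f x)).1 u = (zmap.app m x).1 (u ≫ f.unop) :=
  congr_fun (congrArg Subtype.val (NatTrans.naturality_apply zmap f x)) u

lemma gam_deg (n : ℕ) (c : (GSub.toGSSet A).X ⟶ (EG G π n).X)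
    (Δ' : SimplexCategory) (f : (⦋n⦌ : SimplexCategory) ⟶ Δ')
    (x : X.X.obj (op Δ')) (hf : ¬Function.Injective f.toOrderHom) :
    gam X A n c (X.X.map f.op x) = 0 := by
  cases n with
  | zero =>
    have hs : Subsingleton (Fin ((⦋0⦌ : SimplexCategory).len + 1)) := by
      rw [SimplexCategory.len_mk]
      exact ⟨fun a b => Fin.ext (by omega)⟩
    exact absurd (fun a b _ => @Subsingleton.elim _ hs a b) hf
  | succ m =>
    by_cases h : X.X.map f.op x ∈ A.mem (op ⦋m + 1⦌)
    · rw [gam_mem X A (m + 1) c h]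
      obtain ⟨i, θ, hfeq⟩ := SimplexCategory.eq_σ_comp_of_not_injective f hf
      have hw2 : X.X.map f.op x = X.X.map (SimplexCategory.σ i).op (X.X.map θ.op x) := by
        rw [hfeq, op_comp, FunctorToTypes.map_comp_apply]
      have hy'A : X.X.map θ.op x ∈ A.mem (op ⦋m⦌) := by
        have h1 : X.X.δ i.castSucc (X.X.map f.op x) = X.X.map θ.op x := by
          rw [hw2]
          have h2 := CategoryTheory.SimplicialObject.δ_comp_σ_self (X := X.X) (i := i)
          exact types_congr_hom h2 (X.X.map θ.op x)
        rw [← h1]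
        exact A.map_mem (SimplexCategory.δ i.castSucc).op _ h
      have hsub : (⟨X.X.map f.op x, h⟩ : (GSub.toGSSet A).X.obj (op ⦋m + 1⦌)) =
          (GSub.toGSSet A).X.map (SimplexCategory.σ i).op ⟨X.X.map θ.op x, hy'A⟩ :=
        Subtype.ext hw2
      erw [hsub, e_nat (m + 1) c (SimplexCategory.σ i).op _ (𝟙 (⦋m + 1⦌ : SimplexCategory))]
      have hcomp : (𝟙 (⦋m + 1⦌ : SimplexCategory)) ≫ ((SimplexCategory.σ i).op).unop =
          SimplexCategory.σ i := Category.id_comp _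
      rw [hcomp]
      exact (c.app (op ⦋m⦌) ⟨X.X.map θ.op x, hy'A⟩).2 (SimplexCategory.σ i) (σ_not_inj i)
    · exact dif_neg h

/-- The cochain on `X` induced by a map `X → K(π,q)`. -/
def zet (q : ℕ) (zmap : X.X ⟶ (KG G π q).X) : X.X _⦋q⦌ → π := fun x =>
  (zmap.app (op ⦋q⦌) x).1 (𝟙 (⦋q⦌ : SimplexCategory))

end EML6

open GSSet in
/-- Let `π` be a `ℤG`-module and `(X,A)` a pair of free `G`-simplicial
sets.  If `H^{n+1}_G(X,A;π) = 0`, then for all equivariant simplicial maps `c : A → E(π,n)`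
and `z : X → K(π,n+1)` with `δ ∘ c = z|_A`, there is an equivariant simplicial map
`ℓ : X → E(π,n)` with `ℓ|_A = c` and `δ ∘ ℓ = z`. -/
theorem lift_extend_eilenbergMacLane
    (G : Type) [Group G] [Finite G] (n : ℕ)
    (π : Type) [AddCommGroup π] [DistribMulAction G π]
    (X : GSSet G) (hX : X.Free) (A : GSub X)
    (hH : Subsingleton (HG X A π (n + 1)))
    (c : A.toGSSet.X ⟶ (EG G π n).X) (hc : IsEqv A.toGSSet (EG G π n) c)
    (z : X.X ⟶ (KG G π (n + 1)).X) (hz : IsEqv X (KG G π (n + 1)) z)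
    (hsq : c ≫ deltaE G π n = A.ι ≫ z ≫ kinc G π (n + 1)) :
    ∃ ℓ : X.X ⟶ (EG G π n).X, IsEqv X (EG G π n) ℓ ∧
      A.ι ≫ ℓ = c ∧ ℓ ≫ deltaE G π n = z ≫ kinc G π (n + 1) := by
  classical
  set γ : X.X _⦋n⦌ → π := EML6.gam X A n c with hγdef
  set ζ : X.X _⦋n + 1⦌ → π := EML6.zet X (n + 1) z with hζdef
  have act_inv : ∀ (g : G) (m : SimplexCategoryᵒᵖ) (x : X.X.obj m),
      (X.a g⁻¹).app m ((X.a g).app m x) = x := by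
    intro g m x
    have h1 : X.a (g⁻¹ * g) = X.a g ≫ X.a g⁻¹ := X.act.map_mul g⁻¹ g
    have h2 : X.a (g⁻¹ * g) = 𝟙 X.X := by rw [inv_mul_cancel]; exact X.act.map_one
    exact types_congr_hom (congrArg (fun (t : X.X ⟶ X.X) => t.app m) (h1.symm.trans h2)) x
  have hγe : ∀ (g : G) (x : X.X _⦋n⦌), γ ((X.a g).app (op ⦋n⦌) x) = g • γ x := by
    intro g x
    rw [hγdef]
    by_cases h : x ∈ A.mem (op ⦋n⦌)
    · have hg : (X.a g).app (op ⦋n⦌) x ∈ A.mem (op ⦋n⦌) := A.act_mem g _ x h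
      rw [EML6.gam_mem X A n c hg, EML6.gam_mem X A n c h]
      have he := GSSet.eqv_app (P := GSub.toGSSet A) (Q := EG G π n) hc g (op ⦋n⦌) ⟨x, h⟩
      exact congr_fun (congrArg Subtype.val he) (𝟙 (⦋n⦌ : SimplexCategory))
    · have hg : (X.a g).app (op ⦋n⦌) x ∉ A.mem (op ⦋n⦌) := by
        intro hmem
        have h4 := A.act_mem g⁻¹ _ _ hmem
        rw [act_inv g _ x] at h4
        exact h h4
      rw [EML6.gam_not_mem X A n c hg, EML6.gam_not_mem X A n c h, smul_zero]
  have hz_nat : ∀ {m : SimplexCategoryᵒᵖ} (x : X.X.obj m)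
      (u : (⦋n + 1⦌ : SimplexCategory) ⟶ m.unop),
      (z.app m x).1 u = ζ (X.X.map u.op x) := by
    intro m x u
    have h := EML6.k_nat (n + 1) z u.op x (𝟙 (⦋n + 1⦌ : SimplexCategory))
    rw [Category.id_comp] at h
    rw [hζdef]
    exact h.symm
  have hζe : ∀ (g : G) (x : X.X _⦋n + 1⦌), ζ ((X.a g).app (op ⦋n + 1⦌) x) = g • ζ x := by
    intro g x
    rw [hζdef]
    have he := GSSet.eqv_app (P := X) (Q := KG G π (n + 1)) hz g (op ⦋n + 1⦌) x
    exact congr_fun (congrArg Subtype.val he) (𝟙 (⦋n + 1⦌ : SimplexCategory))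
  have hζdeg : ∀ (i : Fin (n + 1)) (y : X.X _⦋n⦌), ζ (X.X.σ i y) = 0 := by
    intro i y
    have h := hz_nat y (SimplexCategory.σ i)
    rw [(z.app (op ⦋n⦌) y).2.1 (SimplexCategory.σ i) (EML6.σ_not_inj i)] at h
    exact h.symm
  have hζcob : cob X π (n + 1) ζ = 0 := by
    funext x
    show ∑ i : Fin (n + 1 + 2), ((-1 : ℤ) ^ (i : ℕ)) • ζ (X.X.δ i x) = 0
    have hk := (z.app (op ⦋n + 2⦌) x).2.2 (𝟙 (⦋n + 2⦌ : SimplexCategory))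
    refine Eq.trans ?_ hk
    refine Finset.sum_congr rfl fun i _ => ?_
    congr 1
    rw [Category.comp_id]
    exact (hz_nat x (SimplexCategory.δ i)).symm
  have hζγA : ∀ x ∈ A.mem (op ⦋n + 1⦌), ζ x = cob X π n γ x := by
    intro x hx
    have h := congr_fun (types_congr_hom (congrArg
      (fun (t : (GSub.toGSSet A).X ⟶ CochSet π (n + 1)) => t.app (op ⦋n + 1⦌)) hsq)
      (⟨x, hx⟩ : (GSub.toGSSet A).X.obj (op ⦋n + 1⦌))) (𝟙 (⦋n + 1⦌ : SimplexCategory))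
    have h2 : ∀ i : Fin (n + 2),
        (c.app (op ⦋n + 1⦌) ⟨x, hx⟩).1
          (SimplexCategory.δ i ≫ 𝟙 (⦋n + 1⦌ : SimplexCategory)) =
        EML6.gam X A n c (X.X.δ i x) := by
      intro i
      rw [Category.comp_id]
      have h3 := EML6.e_nat n c (SimplexCategory.δ i).op
        (⟨x, hx⟩ : (GSub.toGSSet A).X.obj (op ⦋n + 1⦌)) (𝟙 (⦋n⦌ : SimplexCategory))
      rw [Category.id_comp, Quiver.Hom.unop_op] at h3
      rw [← h3]
      exact (EML6.gam_mem X A n c (A.map_mem (SimplexCategory.δ i).op x hx)).symm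
    rw [hζdef, hγdef]
    calc EML6.zet X (n + 1) z x
        = (z.app (op ⦋n + 1⦌) x).1 (𝟙 (⦋n + 1⦌ : SimplexCategory)) := rfl
      _ = ∑ i : Fin (n + 2), ((-1 : ℤ) ^ (i : ℕ)) • (c.app (op ⦋n + 1⦌) ⟨x, hx⟩).1
            (SimplexCategory.δ i ≫ 𝟙 (⦋n + 1⦌ : SimplexCategory)) := h.symm
      _ = ∑ i : Fin (n + 2), ((-1 : ℤ) ^ (i : ℕ)) • EML6.gam X A n c (X.X.δ i x) :=
          Finset.sum_congr rfl fun i _ =>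
            congrArg (fun t => ((-1 : ℤ) ^ (i : ℕ)) • t) (h2 i)
      _ = cob X π n (EML6.gam X A n c) x := rfl
  set u : X.X _⦋n + 1⦌ → π := fun x => ζ x - cob X π n γ x with hudef
  have hδc : ∀ (g : G) (x : X.X _⦋n + 1⦌),
      cob X π n γ ((X.a g).app (op ⦋n + 1⦌) x) = g • cob X π n γ x := by
    intro g x
    show ∑ i : Fin (n + 2), ((-1 : ℤ) ^ (i : ℕ)) • γ (X.X.δ i ((X.a g).app (op ⦋n + 1⦌) x))
      = g • ∑ i : Fin (n + 2), ((-1 : ℤ) ^ (i : ℕ)) • γ (X.X.δ i x)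
    have hδ : ∀ i : Fin (n + 2), X.X.δ i ((X.a g).app (op ⦋n + 1⦌) x) =
        (X.a g).app (op ⦋n⦌) (X.X.δ i x) := fun i =>
      (NatTrans.naturality_apply (X.a g) (SimplexCategory.δ i).op x).symm
    calc ∑ i : Fin (n + 2), ((-1 : ℤ) ^ (i : ℕ)) • γ (X.X.δ i ((X.a g).app (op ⦋n + 1⦌) x))
        = ∑ i : Fin (n + 2), ((-1 : ℤ) ^ (i : ℕ)) • (g • γ (X.X.δ i x)) := by
          refine Finset.sum_congr rfl fun i _ => ?_
          rw [hδ i, hγe]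
      _ = ∑ i : Fin (n + 2), g • (((-1 : ℤ) ^ (i : ℕ)) • γ (X.X.δ i x)) :=
          Finset.sum_congr rfl fun i _ =>
            ((DistribMulAction.toAddMonoidHom π g).map_zsmul _ _).symm
      _ = g • ∑ i : Fin (n + 2), ((-1 : ℤ) ^ (i : ℕ)) • γ (X.X.δ i x) :=
          (map_sum (DistribMulAction.toAddMonoidHom π g) _ _).symm
  have hue : ∀ (g : G) (x : X.X _⦋n + 1⦌),
      u ((X.a g).app (op ⦋n + 1⦌) x) = g • u x := by
    intro g x
    show ζ _ - cob X π n γ _ = g • (ζ x - cob X π n γ x)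
    rw [hζe, hδc, smul_sub]
  have huA : ∀ x ∈ A.mem (op ⦋n + 1⦌), u x = 0 := by
    intro x hx
    show ζ x - cob X π n γ x = 0
    rw [hζγA x hx, sub_self]
  have hγdeg : ∀ (Δ' : SimplexCategory) (f : (⦋n⦌ : SimplexCategory) ⟶ Δ')
      (x : X.X.obj (op Δ')), ¬Function.Injective f.toOrderHom →
      γ (X.X.map f.op x) = 0 := by
    intro Δ' f x hf
    rw [hγdef]
    exact EML6.gam_deg X A n c Δ' f x hf
  have hudeg : ∀ (i : Fin (n + 1)) (y : X.X _⦋n⦌), u (X.X.σ i y) = 0 := by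
    intro i y
    show ζ (X.X.σ i y) - cob X π n γ (X.X.σ i y) = 0
    rw [hζdeg i y, EML6.cob_vanish_deg X n γ hγdeg i y, sub_zero]
  have hucob : cob X π (n + 1) u = 0 := by
    have h1 : u = ζ - cob X π n γ := rfl
    rw [h1, map_sub, hζcob, EML6.cob_cob X n γ, sub_zero]
  have humem : u ∈ relCocycles X A π (n + 1) :=
    AddSubgroup.mem_inf.mpr ⟨⟨hue, huA⟩, AddMonoidHom.mem_ker.mpr hucob⟩
  obtain ⟨v, hvmem, hvcob⟩ : ∃ v ∈ eqvRelCochain X A π n, cob X π n v = u := by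
    have hclass : (QuotientAddGroup.mk (⟨u, humem⟩ : relCocycles X A π (n + 1)) :
        HG X A π (n + 1)) = 0 := @Subsingleton.elim _ hH _ _
    have h2 := (QuotientAddGroup.eq_zero_iff _).mp hclass
    rw [AddSubgroup.mem_addSubgroupOf] at h2
    have h3 : u ∈ AddSubgroup.map (cob X π n) (eqvRelCochain X A π n) := h2
    obtain ⟨v, hv1, hv2⟩ := h3
    exact ⟨v, hv1, hv2⟩
  obtain ⟨w, hwe, hwA, hwdeg, hwcob⟩ :=
    EML6.key X A n u v hue huA hucob hudeg hvmem.1 hvmem.2 hvcob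
  set L : X.X _⦋n⦌ → π := fun x => γ x + w x with hLdef
  have hLe : ∀ (g : G) (x : X.X _⦋n⦌), L ((X.a g).app (op ⦋n⦌) x) = g • L x := by
    intro g x
    show γ _ + w _ = g • (γ x + w x)
    rw [hγe, hwe, smul_add]
  have hLA : ∀ (x : X.X _⦋n⦌) (hx : x ∈ A.mem (op ⦋n⦌)),
      L x = (c.app (op ⦋n⦌) ⟨x, hx⟩).1 (𝟙 (⦋n⦌ : SimplexCategory)) := by
    intro x hx
    show γ x + w x = _
    rw [hwA x hx, add_zero, hγdef, EML6.gam_mem X A n c hx]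
  have hLdeg : ∀ (Δ' : SimplexCategory) (f : (⦋n⦌ : SimplexCategory) ⟶ Δ')
      (x : X.X.obj (op Δ')), ¬Function.Injective f.toOrderHom →
      L (X.X.map f.op x) = 0 := by
    intro Δ' f x hf
    show γ _ + w _ = 0
    rw [hγdeg Δ' f x hf, hwdeg Δ' f x hf, add_zero]
  have hLcob : cob X π n L = ζ := by
    funext x
    have h1 : cob X π n L x = cob X π n γ x + cob X π n w x := by
      have h0 : L = γ + w := rfl
      rw [h0, map_add]
      rfl
    rw [h1, hwcob]
    show cob X π n γ x + (ζ x - cob X π n γ x) = ζ x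
    abel
  refine ⟨⟨fun m => ↾(fun x =>
      ⟨fun uu => L (X.X.map uu.op x), fun uu huu => hLdeg m.unop uu x huu⟩),
      fun {m m'} f => ?_⟩, ?_, ?_, ?_⟩
  · refine ConcreteCategory.hom_ext _ _ fun x => ?_
    refine Subtype.ext (funext fun uu => ?_)
    show L (X.X.map uu.op (X.X.map f x)) = L (X.X.map (uu ≫ f.unop).op x)
    rw [← FunctorToTypes.map_comp_apply]
    have h5 : f ≫ uu.op = (uu ≫ f.unop).op := by
      rw [op_comp, Quiver.Hom.op_unop]
    rw [h5]
  · intro g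
    refine SSet.hom_ext fun m => ConcreteCategory.hom_ext _ _ fun x => Subtype.ext (funext fun uu => ?_)
    show L (X.X.map uu.op ((X.a g).app m x)) = g • L (X.X.map uu.op x)
    rw [← NatTrans.naturality_apply (X.a g) uu.op x]
    exact hLe g _
  · refine SSet.hom_ext fun m => ConcreteCategory.hom_ext _ _ fun x => Subtype.ext (funext fun uu => ?_)
    show L (X.X.map uu.op x.1) = (c.app m x).1 uu
    have hmem : X.X.map uu.op x.1 ∈ A.mem (op ⦋n⦌) := A.map_mem uu.op x.1 x.2
    rw [hLA _ hmem]
    have h3 := EML6.e_nat n c uu.op x (𝟙 (⦋n⦌ : SimplexCategory))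
    rw [Category.id_comp] at h3
    exact h3
  · refine SSet.hom_ext fun m => ConcreteCategory.hom_ext _ _ fun x => funext fun y => ?_
    show ∑ i : Fin (n + 2), ((-1 : ℤ) ^ (i : ℕ)) • L (X.X.map (SimplexCategory.δ i ≫ y).op x)
        = (z.app m x).1 y
    have hstep : ∀ i : Fin (n + 2), X.X.map (SimplexCategory.δ i ≫ y).op x =
        X.X.δ i (X.X.map y.op x) := by
      intro i
      rw [op_comp, FunctorToTypes.map_comp_apply]
      rfl
    calc ∑ i : Fin (n + 2), ((-1 : ℤ) ^ (i : ℕ)) • L (X.X.map (SimplexCategory.δ i ≫ y).op x)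
        = ∑ i : Fin (n + 2), ((-1 : ℤ) ^ (i : ℕ)) • L (X.X.δ i (X.X.map y.op x)) :=
          Finset.sum_congr rfl fun i _ =>
            congrArg (fun t => ((-1 : ℤ) ^ (i : ℕ)) • t) (congrArg L (hstep i))
      _ = cob X π n L (X.X.map y.op x) := rfl
      _ = ζ (X.X.map y.op x) := by rw [hLcob]
      _ = (z.app m x).1 y := (hz_nat x y).symm
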